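/- arXiv:2502.03585 — 6 statements merged into one kernel-verified Lean document; each statement's English description precedes it below -/
import Mathlib

section
/- If 𝒢 and ℋ are tame groupoids, then the product groupoid 𝒢 × ℋ (the product category, which is a groupoid) is tame and |𝒢 × ℋ| = |𝒢| · |ℋ|. -/
open CategoryTheory

/-- The groupoid cardinality: the sum over isomorphism classes of objects of the
reciprocal of the number of automorphisms. -/
noncomputable def groupoidCard (C : Type*) [Category C] : ℝ :=
  ∑' X : Skeleton C, ((Nat.card (Aut X) : ℝ))⁻¹

/-- A groupoid is tame if the family of reciprocals of automorphism group orders,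
indexed by isomorphism classes, is summable. -/
def IsTame (C : Type*) [Category C] : Prop :=
  Summable (fun X : Skeleton C => ((Nat.card (Aut X) : ℝ))⁻¹)

section Aux

variable {C : Type*} {D : Type*} [Category C] [Category D]

/-- Isomorphisms in a product category correspond to pairs of isomorphisms. -/
def prodIsoEquivAux (X Y : C × D) :
    (X ≅ Y) ≃ ((X.1 ≅ Y.1) × (X.2 ≅ Y.2)) where
  toFun i := ⟨(CategoryTheory.Prod.fst C D).mapIso i, (CategoryTheory.Prod.snd C D).mapIso i⟩
  invFun p := CategoryTheory.Iso.prod p.1 p.2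
  left_inv i := by ext <;> rfl
  right_inv p := by ext <;> rfl

lemma card_aut_congr_of_iso {x y : C} (i : x ≅ y) :
    Nat.card (Aut x) = Nat.card (Aut y) :=
  Nat.card_congr i.conjAut.toEquiv

lemma card_aut_skeleton (S : Skeleton C) :
    Nat.card (Aut S) = Nat.card (Aut (Quotient.out S)) :=
  Nat.card_congr
    ((Functor.FullyFaithful.ofFullyFaithful (fromSkeleton C)).isoEquiv (X := S) (Y := S))

lemma card_aut_toSkeleton (x : C) :
    Nat.card (Aut (toSkeleton x)) = Nat.card (Aut x) := by
  rw [card_aut_skeleton]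
  obtain ⟨i⟩ := Quotient.mk_out (s := isIsomorphicSetoid C) x
  exact card_aut_congr_of_iso i

lemma card_aut_prod (x : C) (y : D) :
    Nat.card (Aut ((x, y) : C × D)) = Nat.card (Aut x) * Nat.card (Aut y) := by
  rw [← Nat.card_prod]
  exact Nat.card_congr (prodIsoEquivAux (x, y) (x, y))

/-- The skeleton of a product category is equivalent to the product of the skeletons. -/
noncomputable def skeletonProdEquivAux :
    Skeleton (C × D) ≃ Skeleton C × Skeleton D where
  toFun Z := (toSkeleton (Quotient.out Z).1, toSkeleton (Quotient.out Z).2)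
  invFun P := toSkeleton ((Quotient.out P.1), (Quotient.out P.2))
  left_inv Z := by
    obtain ⟨i₁⟩ := Quotient.mk_out (s := isIsomorphicSetoid C) (Quotient.out Z).1
    obtain ⟨i₂⟩ := Quotient.mk_out (s := isIsomorphicSetoid D) (Quotient.out Z).2
    calc toSkeleton ((Quotient.out (toSkeleton (Quotient.out Z).1)),
            (Quotient.out (toSkeleton (Quotient.out Z).2)))
        = toSkeleton (Quotient.out Z) := Quotient.sound ⟨i₁.prod i₂⟩
      _ = Z := Quotient.out_eq Z
  right_inv P := by
    obtain ⟨i⟩ := Quotient.mk_out (s := isIsomorphicSetoid (C × D))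
      ((Quotient.out P.1), (Quotient.out P.2))
    refine Prod.ext ?_ ?_
    · calc toSkeleton (Quotient.out (toSkeleton ((Quotient.out P.1), (Quotient.out P.2)))).1
          = toSkeleton (Quotient.out P.1) :=
            Quotient.sound ⟨(CategoryTheory.Prod.fst C D).mapIso i⟩
        _ = P.1 := Quotient.out_eq P.1
    · calc toSkeleton (Quotient.out (toSkeleton ((Quotient.out P.1), (Quotient.out P.2)))).2
          = toSkeleton (Quotient.out P.2) :=
            Quotient.sound ⟨(CategoryTheory.Prod.snd C D).mapIso i⟩
        _ = P.2 := Quotient.out_eq P.2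

end Aux

/-- If `𝒢` and `ℋ` are tame groupoids then the product groupoid `𝒢 × ℋ` is tame and
`|𝒢 × ℋ| = |𝒢| ⬝ |ℋ|`. -/
theorem isTame_prod_and_groupoidCard_prod {G : Type*} {H : Type*} [Groupoid G] [Groupoid H]
    (hG : IsTame G) (hH : IsTame H) :
    IsTame (G × H) ∧ groupoidCard (G × H) = groupoidCard G * groupoidCard H := by
  set g : Skeleton G × Skeleton H → ℝ :=
    fun P => ((Nat.card (Aut P.1) : ℝ))⁻¹ * ((Nat.card (Aut P.2) : ℝ))⁻¹ with hg_def
  have hg : Summable g :=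
    hG.mul_of_nonneg hH (fun _ => by positivity) (fun _ => by positivity)
  have hfg : (fun Z : Skeleton (G × H) => ((Nat.card (Aut Z) : ℝ))⁻¹)
      = g ∘ skeletonProdEquivAux := by
    funext Z
    have h1 : Nat.card (Aut Z) = Nat.card (Aut (Quotient.out Z)) := card_aut_skeleton Z
    have h2 : Nat.card (Aut (Quotient.out Z))
        = Nat.card (Aut (Quotient.out Z).1) * Nat.card (Aut (Quotient.out Z).2) :=
      card_aut_prod (Quotient.out Z).1 (Quotient.out Z).2
    simp only [hg_def, Function.comp_apply, skeletonProdEquivAux,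
      Equiv.coe_fn_mk, card_aut_toSkeleton, h1, h2, Nat.cast_mul, mul_inv]
  have hsum : IsTame (G × H) := by
    rw [IsTame, hfg]
    exact (skeletonProdEquivAux.summable_iff (f := g)).mpr hg
  refine ⟨hsum, ?_⟩
  rw [groupoidCard, hfg]
  rw [show tsum (g ∘ skeletonProdEquivAux) = ∑' P, g P from skeletonProdEquivAux.tsum_eq g]
  rw [groupoidCard, groupoidCard]
  exact (Summable.tsum_mul_tsum hG hH hg).symm
end

section
/- Let G be a finite group acting on a finite set X. Then the groupoid cardinality of the action groupoid X // G (the category whose objects are elements of X and whose morphisms x → y are group elements g with g • x = y) equals #X / #G. -/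
open CategoryTheory

/-- For a finite group `G` acting on a finite set `X`, the groupoid cardinality of the
action groupoid `X // G` is `#X / #G`. -/
theorem groupoidCard_actionCategory (G : Type*) [Group G] [Finite G]
    (X : Type*) [Finite X] [MulAction G X] :
    groupoidCard (ActionCategory G X) = (Nat.card X : ℝ) / (Nat.card G : ℝ) := by
  classical
  set C := ActionCategory G X with hC
  haveI : Finite C := Finite.of_equiv X (ActionCategory.objEquiv G X)
  haveI : Finite (Skeleton C) := Quotient.finite _
  haveI : Fintype (Skeleton C) := Fintype.ofFinite _
  haveI : Fintype C := Fintype.ofFinite _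
  have hn : (Nat.card G : ℝ) ≠ 0 := by
    have := Nat.card_pos (α := G)
    positivity
  -- key fact: fiber size times automorphism count equals #G
  have key : ∀ q : Skeleton C,
      (Nat.card {x : C // toSkeleton x = q}) * (Nat.card (Aut q)) = Nat.card G := by
    intro q
    set y : X := (Quotient.out (s := isIsomorphicSetoid C) q).back with hy
    -- automorphisms ≃ stabilizer
    have eA : Aut q ≃ ((fromSkeleton C).obj q ≅ (fromSkeleton C).obj q) :=
      (Functor.FullyFaithful.ofFullyFaithful (fromSkeleton C)).isoEquiv
    have eB : ((fromSkeleton C).obj q ≅ (fromSkeleton C).obj q)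
        ≃ ((fromSkeleton C).obj q ⟶ (fromSkeleton C).obj q) := Groupoid.isoEquivHom _ _
    have eC : ((fromSkeleton C).obj q ⟶ (fromSkeleton C).obj q)
        ≃ MulAction.stabilizer G y := Equiv.subtypeEquivRight fun g => Iff.rfl
    have e1 : Aut q ≃ MulAction.stabilizer G y := (eA.trans eB).trans eC
    -- fiber ≃ orbit
    have e2 : {x : C // toSkeleton x = q} ≃ MulAction.orbit G y := by
      refine Equiv.ofBijective (fun x => ⟨x.1.back, ?_⟩) ⟨?_, ?_⟩
      · have hx : IsIsomorphic x.1 (Quotient.out (s := isIsomorphicSetoid C) q) :=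
          Quotient.exact (x.2.trans (Quotient.out_eq (s := isIsomorphicSetoid C) q).symm)
        obtain ⟨i⟩ := hx
        exact ⟨i.inv.val, i.inv.property⟩
      · intro a b hab
        have h1 : a.1.back = b.1.back := congrArg Subtype.val hab
        apply Subtype.ext
        exact (ActionCategory.back_coe a.1).symm.trans
          ((congrArg (fun z : X => (z : ActionCategory G X)) h1).trans (ActionCategory.back_coe b.1))
      · rintro ⟨b, g, hg⟩
        have hhom : ((Quotient.out (s := isIsomorphicSetoid C) q :) ⟶ (b : C)) :=
          ⟨g, hg⟩
        have hiso : IsIsomorphic (Quotient.out (s := isIsomorphicSetoid C) q) (b : C) :=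
          ⟨(Groupoid.isoEquivHom _ _).symm hhom⟩
        refine ⟨⟨(b : C), ?_⟩, rfl⟩
        have := Quotient.sound (s := isIsomorphicSetoid C) hiso
        exact toSkeleton_eq_iff.mpr ⟨hiso.some.symm⟩
    rw [Nat.card_congr e2, Nat.card_congr e1, ← Nat.card_prod]
    exact Nat.card_congr (MulAction.orbitProdStabilizerEquivGroup G y)
  -- total count of objects
  have htot : ∑ q : Skeleton C, (Nat.card {x : C // toSkeleton x = q}) = Nat.card C := by
    simp only [Nat.card_eq_fintype_card]
    rw [← Fintype.card_sigma]
    exact Fintype.card_congr (Equiv.sigmaFiberEquiv (toSkeleton : C → Skeleton C))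
  have hCX : Nat.card C = Nat.card X := Nat.card_congr (ActionCategory.objEquiv G X).symm
  rw [groupoidCard, tsum_fintype]
  have hterm : ∀ q : Skeleton C,
      ((Nat.card (Aut q) : ℝ))⁻¹ = (Nat.card {x : C // toSkeleton x = q} : ℝ) / Nat.card G := by
    intro q
    have hk := key q
    have hk' : (Nat.card {x : C // toSkeleton x = q} : ℝ) * (Nat.card (Aut q)) = Nat.card G := by
      exact_mod_cast hk
    have hb : (Nat.card (Aut q) : ℝ) ≠ 0 := by
      intro h
      rw [h, mul_zero] at hk'
      exact hn hk'.symm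
    have ha : (Nat.card {x : C // toSkeleton x = q} : ℝ) ≠ 0 := by
      intro h
      rw [h, zero_mul] at hk'
      exact hn hk'.symm
    rw [← hk']
    exact (div_mul_cancel_left₀ ha _).symm
  rw [Finset.sum_congr rfl fun q _ => hterm q, ← Finset.sum_div, ← Nat.cast_sum, htot, hCX]
end

section
/- Let ℋ be a finite groupoid and 𝒢 a locally finite groupoid such that the functor groupoid ℋ ⥤ 𝒢 is tame. Then |ℋ ⥤ 𝒢| = ∏_{[y] ∈ iso classes of ℋ} ∑_{[x] ∈ iso classes of 𝒢} #Hom(Aut(y), Aut(x)) / #Aut(x), where Hom(Aut(y), Aut(x)) denotes the set of group homomorphisms from the automorphism group of y in ℋ to that of x in 𝒢, the product is a finite product over the skeleton of ℋ, and the inner sum is a tsum over the skeleton of 𝒢. -/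
open CategoryTheory

namespace GpdCard




universe v u v₂ u₂ w

open scoped ENNReal NNReal

section Basic

variable {C : Type u} [Category.{v} C] {D : Type u₂} [Category.{v₂} D]

noncomputable def skOutIso (X : C) : (toSkeleton X).out ≅ X := fromSkeletonToSkeletonIso X

lemma toSkeleton_out (q : Skeleton C) : toSkeleton (q.out) = q := Quotient.out_eq q

lemma toSkeleton_eq_of_iso {X Y : C} (e : X ≅ Y) : toSkeleton X = toSkeleton Y :=
  Quotient.sound ⟨e⟩

noncomputable def isoOfToSkeletonEq {X Y : C} (h : toSkeleton X = toSkeleton Y) : X ≅ Y :=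
  Nonempty.some (Quotient.exact h)

/-- iso between `q.out` and any representative -/
noncomputable def skRepIso (q : Skeleton C) {X : C} (h : toSkeleton X = q) : q.out ≅ X :=
  (isoOfToSkeletonEq (by rw [h, toSkeleton_out])).symm

noncomputable def skAutEquiv (q : Skeleton C) : Aut q ≃* Aut q.out :=
  (Functor.FullyFaithful.ofFullyFaithful (fromSkeleton C)).autMulEquivOfFullyFaithful q

/-- groupoid cardinality valued in `ℝ≥0∞`, with `Aut` computed on representatives. -/
noncomputable def ecard (C : Type u) [Category.{v} C] : ℝ≥0∞ :=
  ∑' q : Skeleton C, (Nat.card (Aut q.out) : ℝ≥0∞)⁻¹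

lemma ecard_eq_tsum_aut (C : Type u) [Category.{v} C] :
    ecard C = ∑' q : Skeleton C, (Nat.card (Aut q) : ℝ≥0∞)⁻¹ := by
  refine tsum_congr fun q => ?_
  rw [Nat.card_congr (skAutEquiv q).toEquiv]

noncomputable def skEquivOfEquivalence (e : C ≌ D) : Skeleton C ≃ Skeleton D where
  toFun q := toSkeleton (e.functor.obj q.out)
  invFun q := toSkeleton (e.inverse.obj q.out)
  left_inv q := by
    show toSkeleton (e.inverse.obj (toSkeleton (e.functor.obj q.out)).out) = q
    have i1 : (toSkeleton (e.functor.obj q.out)).out ≅ e.functor.obj q.out := skOutIso _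
    have : toSkeleton (e.inverse.obj (toSkeleton (e.functor.obj q.out)).out)
        = toSkeleton q.out :=
      toSkeleton_eq_of_iso ((e.inverse.mapIso i1).trans (e.unitIso.symm.app q.out))
    rw [this, toSkeleton_out]
  right_inv q := by
    show toSkeleton (e.functor.obj (toSkeleton (e.inverse.obj q.out)).out) = q
    have i1 : (toSkeleton (e.inverse.obj q.out)).out ≅ e.inverse.obj q.out := skOutIso _
    have : toSkeleton (e.functor.obj (toSkeleton (e.inverse.obj q.out)).out)
        = toSkeleton q.out :=
      toSkeleton_eq_of_iso ((e.functor.mapIso i1).trans (e.counitIso.app q.out))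
    rw [this, toSkeleton_out]

lemma ecard_congr (e : C ≌ D) : ecard C = ecard D := by
  rw [ecard, ecard, ← Equiv.tsum_eq (skEquivOfEquivalence e)
    (fun q => (Nat.card (Aut q.out) : ℝ≥0∞)⁻¹)]
  refine tsum_congr fun q => ?_
  congr 1
  have e1 : Aut ((skEquivOfEquivalence e q).out) ≃* Aut (e.functor.obj q.out) :=
    Aut.autMulEquivOfIso (skOutIso _)
  have e2 : Aut q.out ≃* Aut (e.functor.obj q.out) :=
    (Functor.FullyFaithful.ofFullyFaithful e.functor).autMulEquivOfFullyFaithful q.out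
  rw [Nat.card_congr e1.toEquiv, Nat.card_congr e2.toEquiv]

end Basic




section Counting

variable (Γ : Type*) [Group Γ] [Finite Γ] (S : Type*) [MulAction Γ S] [Finite S]

open MulAction in
lemma tsum_inv_card_stabilizer :
    ∑' c : Quotient (MulAction.orbitRel Γ S),
      (Nat.card (MulAction.stabilizer Γ (Quotient.out c)) : ℝ≥0∞)⁻¹
      = (Nat.card S : ℝ≥0∞) * (Nat.card Γ : ℝ≥0∞)⁻¹ := by
  classical
  letI : Fintype (Quotient (MulAction.orbitRel Γ S)) := Fintype.ofFinite _
  have hΓ0 : (Nat.card Γ : ℝ≥0∞) ≠ 0 := by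
    simp [Nat.card_pos.ne']
  have hΓt : (Nat.card Γ : ℝ≥0∞) ≠ ⊤ := by simp
  have key : ∀ c : Quotient (orbitRel Γ S),
      (Nat.card (stabilizer Γ (Quotient.out c)) : ℝ≥0∞)⁻¹
        = (Nat.card (Γ ⧸ stabilizer Γ (Quotient.out c)) : ℝ≥0∞) * (Nat.card Γ : ℝ≥0∞)⁻¹ := by
    intro c
    have h := Subgroup.card_eq_card_quotient_mul_card_subgroup
      (stabilizer Γ (Quotient.out c))
    have hs0 : (Nat.card (stabilizer Γ (Quotient.out c)) : ℝ≥0∞) ≠ 0 := by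
      exact_mod_cast (Nat.card_pos (α := stabilizer Γ (Quotient.out c))).ne'
    have hq0 : (Nat.card (Γ ⧸ stabilizer Γ (Quotient.out c)) : ℝ≥0∞) ≠ 0 := by
      exact_mod_cast (Nat.card_pos (α := Γ ⧸ stabilizer Γ (Quotient.out c))).ne'
    have hqt : (Nat.card (Γ ⧸ stabilizer Γ (Quotient.out c)) : ℝ≥0∞) ≠ ⊤ := by simp
    rw [show ((Nat.card Γ : ℕ) : ℝ≥0∞)
        = ((Nat.card (Γ ⧸ stabilizer Γ (Quotient.out c))
            * Nat.card (stabilizer Γ (Quotient.out c)) : ℕ) : ℝ≥0∞) from by rw [← h]]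
    rw [Nat.cast_mul, ENNReal.mul_inv (Or.inl hq0) (Or.inl hqt), ← mul_assoc,
      ENNReal.mul_inv_cancel hq0 hqt, one_mul]
  rw [tsum_fintype]
  calc ∑ c, (Nat.card (stabilizer Γ (Quotient.out c)) : ℝ≥0∞)⁻¹
      = ∑ c, (Nat.card (Γ ⧸ stabilizer Γ (Quotient.out c)) : ℝ≥0∞) * (Nat.card Γ : ℝ≥0∞)⁻¹ :=
        Finset.sum_congr rfl fun c _ => key c
    _ = (∑ c, (Nat.card (Γ ⧸ stabilizer Γ (Quotient.out c)) : ℝ≥0∞)) * (Nat.card Γ : ℝ≥0∞)⁻¹ :=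
        (Finset.sum_mul _ _ _).symm
    _ = (Nat.card S : ℝ≥0∞) * (Nat.card Γ : ℝ≥0∞)⁻¹ := by
        congr 1
        have e := MulAction.selfEquivSigmaOrbitsQuotientStabilizer' Γ S
          (φ := Quotient.out) (fun q => Quotient.out_eq' q)
        letI : ∀ c : Quotient (orbitRel Γ S), Fintype (Γ ⧸ stabilizer Γ (Quotient.out c)) :=
          fun c => Fintype.ofFinite _
        rw [Nat.card_congr e]
        rw [Nat.card_eq_fintype_card, Fintype.card_sigma]
        simp [Nat.card_eq_fintype_card]

end Counting





theorem tsum_prod_pi (ι : Type u) [hι : Fintype ι] (β : ι → Type w)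
    (f : ∀ i, β i → ℝ≥0∞) :
    ∑' x : (∀ i, β i), ∏ i, f i (x i) = ∏ i, ∑' b : β i, f i b := by
  revert β f
  refine Fintype.induction_empty_option
    (P := fun α _ => ∀ (β : α → Type w) (f : ∀ i, β i → ℝ≥0∞),
      (∑' x : (∀ i, β i), ∏ i, f i (x i)) = ∏ i, ∑' b : β i, f i b) ?_ ?_ ?_ ι
  · intro α α' _ e ih β f
    letI : Fintype α := Fintype.ofEquiv α' e.symm
    have h1 := ih (fun a => β (e a)) (fun a => f (e a))
    have h2 : ∑' x : (∀ i, β i), ∏ i, f i (x i)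
        = ∑' x : (∀ a, β (e a)), ∏ i, f i ((Equiv.piCongrLeft β e) x i) :=
      ((Equiv.piCongrLeft β e).tsum_eq _).symm
    rw [h2]
    have h3 : ∀ x : (∀ a, β (e a)), ∏ i, f i ((Equiv.piCongrLeft β e) x i)
        = ∏ a, f (e a) (x a) := by
      intro x
      rw [← Equiv.prod_comp e]
      exact Finset.prod_congr rfl fun a _ => by
        rw [Equiv.piCongrLeft_apply_apply]
    rw [tsum_congr h3, h1, ← Equiv.prod_comp e]
  · intro β f
    have h1 : ∀ x : (∀ i : PEmpty.{u+1}, β i), ∏ i, f i (x i) = 1 := by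
      intro x; simp
    haveI : Unique (∀ i : PEmpty.{u+1}, β i) :=
      ⟨⟨fun i => i.elim⟩, fun x => funext fun i => i.elim⟩
    rw [tsum_congr h1, tsum_eq_single (default : ∀ i : PEmpty.{u+1}, β i)
      (fun b hb => absurd (Subsingleton.elim b default) hb)]
    simp
  · intro α _ ih β f
    have h2 : ∑' x : (∀ i, β i), ∏ i, f i (x i)
        = ∑' p : (β none × ∀ a, β (some a)),
            ∏ i, f i ((Equiv.piOptionEquivProd (β := β)).symm p i) :=
      ((Equiv.piOptionEquivProd (β := β)).symm.tsum_eq _).symm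
    rw [h2]
    have h3 : ∀ p : (β none × ∀ a, β (some a)),
        ∏ i, f i ((Equiv.piOptionEquivProd (β := β)).symm p i)
          = f none p.1 * ∏ a, f (some a) (p.2 a) := by
      intro p
      rw [Fintype.prod_option]
      simp
    rw [tsum_congr h3]
    rw [show (∑' (b : β none × ((a : α) → β (some a))),
          f none b.1 * ∏ a : α, f (some a) (b.2 a))
        = ∑' (x : β none), ∑' (y : ∀ a, β (some a)), f none x * ∏ a : α, f (some a) (y a) from ENNReal.tsum_prod (f := fun (x : β none) (y : ∀ a, β (some a)) => f none x * ∏ a : α, f (some a) (y a))]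
    simp only [ENNReal.tsum_mul_left]
    rw [ENNReal.tsum_mul_right, ih, Fintype.prod_option]





section SingleObjFunctors

variable {C : Type u} [Category.{v} C] {M : Type*} [Monoid M]

/-- Finite instance for isos. -/
instance instFiniteIso (X Y : C) [Finite (X ⟶ Y)] : Finite (X ≅ Y) :=
  Finite.of_injective (fun i => i.hom) (fun _ _ h => Iso.ext h)

instance instFiniteAut (X : C) [Finite (X ⟶ X)] : Finite (Aut X) :=
  inferInstanceAs (Finite (X ≅ X))

instance instFiniteMonoidHom {M N : Type*} [Monoid M] [Monoid N] [Finite M] [Finite N] :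
    Finite (M →* N) :=
  Finite.of_injective (fun f => (f : M → N)) DFunLike.coe_injective

/-- The functor `SingleObj M ⥤ C` associated to `X : C` and `ρ : M →* End X`. -/
def toFunctor (X : C) (ρ : M →* End X) : SingleObj M ⥤ C where
  obj _ := X
  map m := ρ m
  map_id _ := ρ.map_one
  map_comp {x y z} m n := ρ.map_mul n m

/-- The monoid hom underlying a functor `SingleObj M ⥤ C`. -/
def functorHom (F : SingleObj M ⥤ C) : M →* End (F.obj (SingleObj.star M)) where
  toFun m := F.map m
  map_one' := F.map_id _
  map_mul' m n := F.map_comp n m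

lemma functorHom_apply (F : SingleObj M ⥤ C) (m : M) : functorHom F m = F.map m := rfl

/-- Isos between `toFunctor`s from conjugation relations. -/
def toFunctorIso {X Y : C} (ρ : M →* End X) (σ : M →* End Y) (e : X ≅ Y)
    (h : ∀ m, σ m = e.inv ≫ ρ m ≫ e.hom) : toFunctor X ρ ≅ toFunctor Y σ :=
  NatIso.ofComponents (fun _ => e) (by
    intro _ _ m
    show ρ m ≫ e.hom = e.hom ≫ σ m
    rw [h m, ← Category.assoc, ← Category.assoc, e.hom_inv_id, Category.id_comp])

/-- Every functor `SingleObj M ⥤ C` is isomorphic to a `toFunctor`. -/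
def isoToFunctor (F : SingleObj M ⥤ C) :
    F ≅ toFunctor (F.obj (SingleObj.star M)) (functorHom F) :=
  NatIso.ofComponents (fun _ => Iso.refl _) (by
    intro _ _ m
    show F.map m ≫ 𝟙 _ = 𝟙 _ ≫ (functorHom F) m
    rw [Category.comp_id, Category.id_comp, functorHom_apply])

/-- Conjugation action of `Aut X` on `M →* End X`. -/
instance conjMulAction (X : C) : MulAction (Aut X) (M →* End X) where
  smul g ρ :=
    { toFun := fun m => g.inv ≫ ρ m ≫ g.hom
      map_one' := by simp; exact g.inv_hom_id
      map_mul' := fun m n => by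
        show g.inv ≫ ρ (m * n) ≫ g.hom
          = (g.inv ≫ ρ n ≫ g.hom) ≫ (g.inv ≫ ρ m ≫ g.hom)
        rw [ρ.map_mul]
        show g.inv ≫ (ρ n ≫ ρ m) ≫ g.hom = _
        simp
        exact congrArg (g.inv ≫ ρ n ≫ ·) (g.hom_inv_id_assoc _).symm }
  one_smul ρ := by
    ext m
    show 𝟙 _ ≫ ρ m ≫ 𝟙 _ = ρ m
    simp
  mul_smul g h ρ := by
    ext m
    show (g.inv ≫ h.inv) ≫ ρ m ≫ (h.hom ≫ g.hom)
      = g.inv ≫ (h.inv ≫ ρ m ≫ h.hom) ≫ g.hom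
    simp

lemma conj_smul_apply (X : C) (g : Aut X) (ρ : M →* End X) (m : M) :
    (g • ρ) m = g.inv ≫ ρ m ≫ g.hom := rfl

/-- The automorphisms of `toFunctor X ρ` are the stabilizer of `ρ` under conjugation. -/
noncomputable def autToFunctorEquivStabilizer (X : C) (ρ : M →* End X) :
    Aut (toFunctor X ρ) ≃ MulAction.stabilizer (Aut X) ρ where
  toFun η := by
    refine ⟨⟨η.hom.app (SingleObj.star M), η.inv.app (SingleObj.star M), ?_, ?_⟩, ?_⟩
    · exact congrArg (fun t => NatTrans.app t (SingleObj.star M)) (Iso.hom_inv_id (η : toFunctor X ρ ≅ toFunctor X ρ))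
    · exact congrArg (fun t => NatTrans.app t (SingleObj.star M)) (Iso.inv_hom_id (η : toFunctor X ρ ≅ toFunctor X ρ))
    · show _ • ρ = ρ
      ext m
      refine (conj_smul_apply _ _ _ m).trans ?_
      show η.inv.app _ ≫ ρ m ≫ η.hom.app _ = ρ m
      have h := η.hom.naturality (X := SingleObj.star M) (Y := SingleObj.star M) m
      -- h : (toFunctor X ρ).map m ≫ η.hom.app _ = η.hom.app _ ≫ (toFunctor X ρ).map m
      show η.inv.app _ ≫ (toFunctor X ρ).map m ≫ η.hom.app _ = (toFunctor X ρ).map m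
      rw [h, ← Category.assoc, ← NatTrans.comp_app, η.inv_hom_id]
      show 𝟙 _ ≫ _ = _
      rw [Category.id_comp]
  invFun g :=
    { hom := { app := fun _ => (g : Aut X).hom
               naturality := fun _ _ m => by
                 show (toFunctor X ρ).map m ≫ _ = _ ≫ (toFunctor X ρ).map m
                 show ρ m ≫ (g : Aut X).hom = (g : Aut X).hom ≫ ρ m
                 have hg : (g : Aut X) • ρ = ρ := g.2
                 have h2 : ((g : Aut X) • ρ) m = ρ m := DFunLike.congr_fun hg m
                 rw [conj_smul_apply] at h2
                 calc ρ m ≫ (g : Aut X).hom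
                     = ((g : Aut X).hom ≫ (g : Aut X).inv) ≫ ρ m ≫ (g : Aut X).hom := by
                       exact ((congrArg (· ≫ ρ m ≫ (g : Aut X).hom) (g : Aut X).hom_inv_id).trans
                         (Category.id_comp _)).symm
                   _ = (g : Aut X).hom ≫ ρ m := by
                       rw [Category.assoc, h2] }
      inv := { app := fun _ => (g : Aut X).inv
               naturality := fun _ _ m => by
                 show ρ m ≫ (g : Aut X).inv = (g : Aut X).inv ≫ ρ m
                 have hg : (g : Aut X) • ρ = ρ := g.2
                 have h2 : ((g : Aut X) • ρ) m = ρ m := DFunLike.congr_fun hg m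
                 rw [conj_smul_apply] at h2
                 conv_lhs => rw [← h2]
                 simp
                 exact congrArg (fun t => (g : Aut X).inv ≫ ρ m ≫ t) (g : Aut X).hom_inv_id |>.trans (by simp) }
      hom_inv_id := by ext; exact (g : Aut X).hom_inv_id
      inv_hom_id := by ext; exact (g : Aut X).inv_hom_id }
  left_inv η := by
    ext
    rfl
  right_inv g := by
    ext
    rfl

end SingleObjFunctors


section SingleObjSkeleton

variable {C : Type u} [Category.{v} C] {M : Type*} [Monoid M]

/-- Transport a monoid hom into `End X` along an iso. -/
def transportHom {X Y : C} (e : X ≅ Y) (ρ : M →* End X) : M →* End Y where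
  toFun m := e.inv ≫ ρ m ≫ e.hom
  map_one' := by simp
  map_mul' m n := by
    show e.inv ≫ ρ (m * n) ≫ e.hom
      = (e.inv ≫ ρ n ≫ e.hom) ≫ (e.inv ≫ ρ m ≫ e.hom)
    rw [ρ.map_mul]
    show e.inv ≫ (ρ n ≫ ρ m) ≫ e.hom = _
    simp

variable (M) (G : Type u₂) [Groupoid.{v₂} G]

noncomputable def sOE
    (p : Σ x : Skeleton G,
      Quotient (MulAction.orbitRel (Aut (Quotient.out x)) (M →* End (Quotient.out x)))) :
    Skeleton (SingleObj M ⥤ G) :=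
  toSkeleton (toFunctor (Quotient.out p.1) (Quotient.out p.2))

lemma sOE_injective : Function.Injective (sOE M G) := by
  rintro ⟨x, c⟩ ⟨x', c'⟩ h
  dsimp [sOE] at h
  have η : toFunctor (Quotient.out x) (Quotient.out c)
      ≅ toFunctor (Quotient.out x') (Quotient.out c') := isoOfToSkeletonEq h
  set e : Quotient.out x ≅ Quotient.out x' := η.app (SingleObj.star M) with he
  have hx : x = x' := by
    have h2 := toSkeleton_eq_of_iso e
    rwa [toSkeleton_out, toSkeleton_out] at h2
  subst hx
  have hcc : c = c' := by
    rw [← Quotient.out_equiv_out]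
    have hnat : ∀ m : M, (Quotient.out c) m ≫ e.hom = e.hom ≫ (Quotient.out c') m :=
      fun m => η.hom.naturality (X := SingleObj.star M) (Y := SingleObj.star M) m
    refine MulAction.mem_orbit_iff.mpr ⟨(e : Aut (Quotient.out x))⁻¹, ?_⟩
    ext m
    rw [conj_smul_apply]
    show e.hom ≫ (Quotient.out c') m ≫ e.inv = (Quotient.out c) m
    rw [← Category.assoc, ← hnat m]
    simp
  rw [hcc]

lemma sOE_surjective : Function.Surjective (sOE M G) := by
  intro q
  set F := Quotient.out q with hF
  set X := F.obj (SingleObj.star M) with hX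
  set x := toSkeleton X with hx
  set ι : Quotient.out x ≅ X := skOutIso X with hι
  set σ : M →* End (Quotient.out x) := transportHom ι.symm (functorHom F) with hσ
  refine ⟨⟨x, Quotient.mk _ σ⟩, ?_⟩
  dsimp [sOE]
  have hrel := Quotient.exact (Quotient.out_eq (Quotient.mk (MulAction.orbitRel
      (Aut (Quotient.out x)) (M →* End (Quotient.out x))) σ))
  obtain ⟨g, hg⟩ := hrel
  have h1 : toFunctor (Quotient.out x) ((Quotient.mk _ σ :
      Quotient (MulAction.orbitRel (Aut (Quotient.out x)) (M →* End (Quotient.out x)))).out)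
      ≅ toFunctor (Quotient.out x) σ := by
    refine (toFunctorIso σ _ (g : Aut (Quotient.out x)) ?_).symm
    intro m
    rw [← hg, conj_smul_apply]
  have h2 : toFunctor (Quotient.out x) σ ≅ toFunctor X (functorHom F) :=
    (toFunctorIso (functorHom F) σ ι.symm (fun m => rfl)).symm
  have h3 : toFunctor X (functorHom F) ≅ F := (isoToFunctor F).symm
  exact (toSkeleton_eq_of_iso ((h1 ≪≫ h2) ≪≫ h3)).trans (toSkeleton_out q)

instance instFiniteEnd (X : C) [Finite (X ⟶ X)] : Finite (End X) :=
  inferInstanceAs (Finite (X ⟶ X))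

lemma card_aut_sOE (p) :
    Nat.card (Aut ((sOE M G p).out))
      = Nat.card (MulAction.stabilizer (Aut (Quotient.out p.1)) (Quotient.out p.2)) := by
  have i : ((sOE M G p).out) ≅ toFunctor (Quotient.out p.1) (Quotient.out p.2) :=
    skOutIso _
  rw [Nat.card_congr (Aut.autMulEquivOfIso i).toEquiv,
    Nat.card_congr (autToFunctorEquivStabilizer _ _)]

lemma ecard_singleObj [Finite M] [∀ x y : G, Finite (x ⟶ y)] :
    ecard (SingleObj M ⥤ G)
      = ∑' x : Skeleton G,
          (Nat.card (M →* End (Quotient.out x)) : ℝ≥0∞)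
            * (Nat.card (Aut (Quotient.out x)) : ℝ≥0∞)⁻¹ := by
  have hbij : Function.Bijective (sOE M G) := ⟨sOE_injective M G, sOE_surjective M G⟩
  rw [ecard, ← (Equiv.ofBijective _ hbij).tsum_eq, ENNReal.tsum_sigma']
  refine tsum_congr fun x => ?_
  have h1 : ∀ c, (Nat.card (Aut (((Equiv.ofBijective (sOE M G) hbij) ⟨x, c⟩).out)) : ℝ≥0∞)⁻¹
      = (Nat.card (MulAction.stabilizer (Aut (Quotient.out x)) (Quotient.out c)) : ℝ≥0∞)⁻¹ :=
    fun c => by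
      rw [show ((Equiv.ofBijective (sOE M G) hbij) ⟨x, c⟩) = sOE M G ⟨x, c⟩ from rfl,
        card_aut_sOE]
  rw [tsum_congr h1, tsum_inv_card_stabilizer]

end SingleObjSkeleton

section Skeletal

variable {H : Type u} [Groupoid.{v} H]

lemma skelEqOfHom {j k : Skeleton H} (f : j ⟶ k) : j = k := by
  have e : Quotient.out j ≅ Quotient.out k := Groupoid.isoEquivHom _ _ |>.symm f.hom
  have h := toSkeleton_eq_of_iso e
  rwa [toSkeleton_out, toSkeleton_out] at h

/-- An endomorphism in the skeleton of a groupoid, as an automorphism. -/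
noncomputable def autOfEnd (j : Skeleton H) (f : j ⟶ j) : Aut j where
  hom := f
  inv := InducedCategory.homMk (Groupoid.inv f.hom)
  hom_inv_id := InducedCategory.hom_ext (Groupoid.comp_inv f.hom)
  inv_hom_id := InducedCategory.hom_ext (Groupoid.inv_comp f.hom)

@[simp] lemma autOfEnd_hom (j : Skeleton H) (f : j ⟶ j) : (autOfEnd j f).hom = f := rfl

/-- Inclusion of the one-object groupoid on `Aut k` into the skeleton. -/
def inc (k : Skeleton H) : SingleObj (Aut k) ⥤ Skeleton H where
  obj _ := k
  map a := a.hom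
  map_id _ := rfl
  map_comp {x y z} a b := rfl

variable {G : Type u₂} [Category.{v₂} G]

/-- Assemble a functor on the skeleton from functors on automorphism groups. -/
noncomputable def assemble (Q : ∀ k : Skeleton H, SingleObj (Aut k) ⥤ G) : Skeleton H ⥤ G where
  obj k := (Q k).obj (SingleObj.star _)
  map {j k} f :=
    (Q j).map (autOfEnd j (f ≫ eqToHom (skelEqOfHom f).symm))
      ≫ eqToHom (congrArg (fun k' => (Q k').obj (SingleObj.star _)) (skelEqOfHom f))
  map_id k := by
    show (Q k).map (autOfEnd k (𝟙 k ≫ eqToHom (skelEqOfHom (𝟙 k)).symm)) ≫ eqToHom _ = _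
    have h1 : autOfEnd k (𝟙 k ≫ eqToHom (skelEqOfHom (𝟙 k)).symm) = 1 := by
      apply Iso.ext
      show 𝟙 k ≫ eqToHom (skelEqOfHom (𝟙 k)).symm = 𝟙 k
      rw [eqToHom_refl, Category.comp_id]
    rw [h1, eqToHom_refl, Category.comp_id]
    show (Q k).map (𝟙 _) = _
    rw [(Q k).map_id]
  map_comp {i j k} f g := by
    have hij := skelEqOfHom f
    subst hij
    have hjk := skelEqOfHom g
    subst hjk
    show (Q i).map (autOfEnd i ((f ≫ g) ≫ eqToHom (skelEqOfHom (f ≫ g)).symm)) ≫ eqToHom _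
      = ((Q i).map (autOfEnd i (f ≫ eqToHom (skelEqOfHom f).symm)) ≫ eqToHom _)
        ≫ ((Q i).map (autOfEnd i (g ≫ eqToHom (skelEqOfHom g).symm)) ≫ eqToHom _)
    have h1 : ∀ h : i ⟶ i, autOfEnd i (h ≫ eqToHom (skelEqOfHom h).symm) = autOfEnd i h := by
      intro h
      apply Iso.ext
      show h ≫ eqToHom (skelEqOfHom h).symm = h
      rw [eqToHom_refl, Category.comp_id]
    rw [h1, h1, h1]
    simp only [eqToHom_refl, Category.comp_id]
    have h2 : autOfEnd i (f ≫ g) = autOfEnd i g * autOfEnd i f := by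
      apply Iso.ext
      rfl
    rw [h2]
    exact (Q i).map_comp (autOfEnd i f) (autOfEnd i g)

noncomputable def incCompAssemble (Q : ∀ k : Skeleton H, SingleObj (Aut k) ⥤ G)
    (k : Skeleton H) : inc k ⋙ assemble Q ≅ Q k :=
  NatIso.ofComponents (fun _ => Iso.refl _) (by
    intro x y a
    show (assemble Q).map ((inc k).map a) ≫ 𝟙 _ = 𝟙 _ ≫ (Q k).map a
    rw [Category.comp_id, Category.id_comp]
    show (Q k).map (autOfEnd k (a.hom ≫ eqToHom (skelEqOfHom a.hom).symm))
      ≫ eqToHom _ = (Q k).map a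
    have h1 : autOfEnd k (a.hom ≫ eqToHom (skelEqOfHom a.hom).symm) = a := by
      apply Iso.ext
      show a.hom ≫ eqToHom (skelEqOfHom a.hom).symm = a.hom
      rw [eqToHom_refl, Category.comp_id]
    rw [h1]; exact Category.comp_id _)

/-- Natural isomorphisms from componentwise isomorphisms over the skeleton. -/
noncomputable def natIsoOfRestrict {F F' : Skeleton H ⥤ G}
    (η : ∀ k : Skeleton H, (inc k ⋙ F ≅ inc k ⋙ F')) : F ≅ F' :=
  NatIso.ofComponents (fun k => (η k).app (SingleObj.star (Aut k))) (by
    intro j k f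
    have hjk := skelEqOfHom f
    subst hjk
    exact (η j).hom.naturality (autOfEnd j f))

noncomputable def autPiEquiv (F : Skeleton H ⥤ G) :
    Aut F ≃ ∀ k : Skeleton H, Aut (inc k ⋙ F) where
  toFun α k := Functor.isoWhiskerLeft (inc k) α
  invFun β := natIsoOfRestrict (fun k => β k)
  left_inv α := by
    apply Iso.ext
    apply NatTrans.ext
    funext k
    rfl
  right_inv β := by
    funext k
    apply Iso.ext
    apply NatTrans.ext
    funext x
    show ((natIsoOfRestrict fun k => β k).hom.app ((inc k).obj x)) = (β k).hom.app x
    have : x = SingleObj.star (Aut k) := Subsingleton.elim _ _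
    subst this
    rfl

end Skeletal

section SkeletalCard

variable {H : Type u} [Groupoid.{v} H] {G : Type u₂} [Groupoid.{v₂} G]

instance instFiniteSkeleton {C : Type u} [Category.{v} C] [Finite C] : Finite (Skeleton C) :=
  inferInstanceAs (Finite (Quotient (isIsomorphicSetoid C)))

instance instFiniteSkeletonHom {C : Type*} [Category C] [∀ x y : C, Finite (x ⟶ y)]
    (j k : Skeleton C) : Finite (j ⟶ k) :=
  Finite.of_injective (fun f : j ⟶ k => f.hom) (fun _ _ h => InducedCategory.hom_ext h)

instance instFiniteSingleObj (M : Type*) : Finite (SingleObj M) :=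
  inferInstanceAs (Finite Unit)

instance instFiniteNatTrans {J : Type*} [Category J] [Finite J] {C : Type*} [Category C]
    [∀ x y : C, Finite (x ⟶ y)] (F F' : J ⥤ C) : Finite (F ⟶ F') :=
  Finite.of_injective (fun τ => (τ.app : ∀ j, F.obj j ⟶ F'.obj j))
    (fun _ _ h => NatTrans.ext h)

variable (H G)

noncomputable def skFunctorPi
    (q : Skeleton (Skeleton H ⥤ G)) (k : Skeleton H) : Skeleton (SingleObj (Aut k) ⥤ G) :=
  toSkeleton (inc k ⋙ Quotient.out q)

lemma skFunctorPi_injective : Function.Injective (skFunctorPi H G) := by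
  intro q q' h
  have η : ∀ k : Skeleton H,
      (inc k ⋙ Quotient.out q) ≅ (inc k ⋙ Quotient.out q') :=
    fun k => isoOfToSkeletonEq (congrFun h k)
  have e : Quotient.out q ≅ Quotient.out q' := natIsoOfRestrict η
  have h2 := toSkeleton_eq_of_iso e
  rwa [toSkeleton_out, toSkeleton_out] at h2

lemma skFunctorPi_surjective : Function.Surjective (skFunctorPi H G) := by
  intro P
  refine ⟨toSkeleton (assemble (fun k => Quotient.out (P k))), funext fun k => ?_⟩
  have e1 : Quotient.out (toSkeleton (assemble (fun k => Quotient.out (P k))))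
      ≅ assemble (fun k => Quotient.out (P k)) := skOutIso _
  have e2 : inc k ⋙ Quotient.out (toSkeleton (assemble (fun k => Quotient.out (P k))))
      ≅ Quotient.out (P k) :=
    (Functor.isoWhiskerLeft (inc k) e1).trans (incCompAssemble _ k)
  exact (toSkeleton_eq_of_iso e2).trans (toSkeleton_out (P k))

variable {H G}

lemma card_aut_eq_prod [Fintype (Skeleton H)]
    (F : Skeleton H ⥤ G) :
    Nat.card (Aut F) = ∏ k : Skeleton H, Nat.card (Aut (inc k ⋙ F)) := by
  rw [Nat.card_congr (autPiEquiv F), Nat.card_pi]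

lemma ecard_skeletal_functor [Fintype (Skeleton H)] [∀ x y : H, Finite (x ⟶ y)]
    [∀ x y : G, Finite (x ⟶ y)] :
    ecard (Skeleton H ⥤ G) = ∏ k : Skeleton H, ecard (SingleObj (Aut k) ⥤ G) := by
  have hbij : Function.Bijective (skFunctorPi H G) :=
    ⟨skFunctorPi_injective H G, skFunctorPi_surjective H G⟩
  set E := Equiv.ofBijective _ hbij with hE
  rw [ecard, ← E.symm.tsum_eq]
  have hterm : ∀ P : ∀ k : Skeleton H, Skeleton (SingleObj (Aut k) ⥤ G),
      (Nat.card (Aut (Quotient.out (E.symm P))) : ℝ≥0∞)⁻¹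
        = ∏ k : Skeleton H, (Nat.card (Aut (Quotient.out (P k))) : ℝ≥0∞)⁻¹ := by
    intro P
    have hP : ∀ k, toSkeleton (inc k ⋙ Quotient.out (E.symm P)) = P k := by
      intro k
      exact congrFun (E.apply_symm_apply P) k
    have hc : ∀ k, Nat.card (Aut (inc k ⋙ Quotient.out (E.symm P)))
        = Nat.card (Aut (Quotient.out (P k))) := by
      intro k
      exact Nat.card_congr (Aut.autMulEquivOfIso (skRepIso (P k) (hP k)).symm).toEquiv
    rw [card_aut_eq_prod]
    rw [Finset.prod_congr rfl (fun k _ => hc k)]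
    rw [Nat.cast_prod]
    rw [ENNReal.prod_inv_distrib]
    intro i _ j _ _
    left
    have : Nat.card (Aut (Quotient.out (P i))) ≠ 0 := Nat.card_pos.ne'
    exact_mod_cast this
  rw [tsum_congr hterm, tsum_prod_pi (Skeleton H)
    (fun k => Skeleton (SingleObj (Aut k) ⥤ G))
    (fun k s => (Nat.card (Aut (Quotient.out s)) : ℝ≥0∞)⁻¹)]
  rfl

end SkeletalCard

section Bridge

variable {G : Type u₂} [Groupoid.{v₂} G]

/-- In a groupoid, automorphisms and endomorphisms coincide. -/
def groupoidAutEndMulEquiv (X : G) : Aut X ≃* End X where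
  toFun a := a.hom
  invFun f := ⟨f, Groupoid.inv f, Groupoid.comp_inv f, Groupoid.inv_comp f⟩
  left_inv a := Iso.ext rfl
  right_inv f := rfl
  map_mul' a b := rfl

/-- Composing with a `MulEquiv` of codomains gives an equivalence of hom sets. -/
def monoidHomCongrEquiv {M N N' : Type*} [Monoid M] [Monoid N] [Monoid N']
    (e : N ≃* N') : (M →* N) ≃ (M →* N') where
  toFun f := e.toMonoidHom.comp f
  invFun g := e.symm.toMonoidHom.comp g
  left_inv f := by ext m; simp
  right_inv g := by ext m; simp

lemma ecard_singleObj' (M : Type*) [Monoid M] [Finite M] [∀ x y : G, Finite (x ⟶ y)] :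
    ecard (SingleObj M ⥤ G)
      = ∑' x : Skeleton G,
          (Nat.card (M →* Aut x) : ℝ≥0∞) * (Nat.card (Aut x) : ℝ≥0∞)⁻¹ := by
  rw [ecard_singleObj]
  refine tsum_congr fun x => ?_
  have e0 : Aut x ≃* End (Quotient.out x) :=
    (skAutEquiv x).trans (groupoidAutEndMulEquiv (Quotient.out x))
  have h1 : Nat.card (M →* End (Quotient.out x)) = Nat.card (M →* Aut x) :=
    Nat.card_congr (monoidHomCongrEquiv e0.symm)
  have h2 : Nat.card (Aut (Quotient.out x)) = Nat.card (Aut x) :=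
    (Nat.card_congr (skAutEquiv x).toEquiv).symm
  rw [h1, h2]

lemma ecard_functor {H : Type u} [Groupoid.{v} H] [Finite H] [Fintype (Skeleton H)]
    [∀ x y : H, Finite (x ⟶ y)] [∀ x y : G, Finite (x ⟶ y)] :
    ecard (H ⥤ G) = ∏ y : Skeleton H, ∑' x : Skeleton G,
      (Nat.card (Aut y →* Aut x) : ℝ≥0∞) * (Nat.card (Aut x) : ℝ≥0∞)⁻¹ := by
  have h0 : ecard (H ⥤ G) = ecard (Skeleton H ⥤ G) :=
    (ecard_congr (Equivalence.congrLeft (skeletonEquivalence H))).symm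
  rw [h0, ecard_skeletal_functor]
  exact Finset.prod_congr rfl fun k _ => ecard_singleObj' (Aut k)

/-- Unconditional comparison of real and extended-nonnegative-real `tsum`s. -/
lemma tsum_coe_eq_toReal {ι : Type*} (f : ι → ℝ≥0) :
    ∑' i, (f i : ℝ) = (∑' i, (f i : ℝ≥0∞)).toReal := by
  by_cases h : Summable f
  · rw [← ENNReal.coe_tsum h, ENNReal.coe_toReal, NNReal.coe_tsum]
  · rw [tsum_eq_zero_of_not_summable (fun hs => h (NNReal.summable_coe.mp hs))]
    have ht : (∑' i, (f i : ℝ≥0∞)) = ⊤ := by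
      by_contra ht
      exact h (ENNReal.tsum_coe_ne_top_iff_summable.mp ht)
    rw [ht, ENNReal.toReal_top]

end Bridge

end GpdCard

open GpdCard in
open scoped ENNReal NNReal in
/-- If `ℋ` is a finite groupoid and `𝒢` is a locally finite groupoid such that the
functor groupoid `ℋ ⥤ 𝒢` is tame, then
`|ℋ ⥤ 𝒢| = ∏_{[y] ∈ sk ℋ} ∑_{[x] ∈ sk 𝒢} #Hom(Aut y, Aut x) / #Aut x`. -/
theorem groupoidCard_functorCategory {H G : Type*} [Groupoid H] [Groupoid G]
    [Finite H] [∀ x y : H, Finite (x ⟶ y)] [∀ x y : G, Finite (x ⟶ y)]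
    (htame : IsTame (H ⥤ G)) :
    groupoidCard (H ⥤ G) =
      ∏ᶠ y : Skeleton H, ∑' x : Skeleton G,
        (Nat.card (Aut y →* Aut x) : ℝ) / (Nat.card (Aut x) : ℝ) := by
  classical
  letI : Fintype (Skeleton H) := Fintype.ofFinite _
  have hLHS : groupoidCard (H ⥤ G) = (ecard (H ⥤ G)).toReal := by
    have hcard : ∀ q : Skeleton (H ⥤ G), (Nat.card (Aut q) : ℝ≥0) ≠ 0 := fun q => by
      have h1 : Nat.card (Aut q) ≠ 0 := Nat.card_pos.ne'
      exact_mod_cast h1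
    have hfun : (fun q : Skeleton (H ⥤ G) => ((Nat.card (Aut q) : ℝ))⁻¹)
        = fun q => ((((Nat.card (Aut q) : ℝ≥0))⁻¹ : ℝ≥0) : ℝ) := by
      funext q; push_cast; rfl
    rw [groupoidCard, hfun, tsum_coe_eq_toReal, ecard_eq_tsum_aut]
    congr 1
    refine (tsum_congr fun q => ?_).symm
    rw [ENNReal.coe_inv (hcard q)]
    congr 1
  have hfact : ∀ y : Skeleton H,
      (∑' x : Skeleton G, (Nat.card (Aut y →* Aut x) : ℝ) / (Nat.card (Aut x) : ℝ))
        = (∑' x : Skeleton G,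
            (Nat.card (Aut y →* Aut x) : ℝ≥0∞) * (Nat.card (Aut x) : ℝ≥0∞)⁻¹).toReal := by
    intro y
    have hcard : ∀ x : Skeleton G, (Nat.card (Aut x) : ℝ≥0) ≠ 0 := fun x => by
      have h1 : Nat.card (Aut x) ≠ 0 := Nat.card_pos.ne'
      exact_mod_cast h1
    have hfun : (fun x : Skeleton G =>
          (Nat.card (Aut y →* Aut x) : ℝ) / (Nat.card (Aut x) : ℝ))
        = fun x => ((((Nat.card (Aut y →* Aut x) : ℝ≥0)
            * ((Nat.card (Aut x) : ℝ≥0))⁻¹ : ℝ≥0)) : ℝ) := by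
      funext x; push_cast; rw [div_eq_mul_inv]
    rw [hfun, tsum_coe_eq_toReal]
    congr 1
    refine tsum_congr fun x => ?_
    rw [ENNReal.coe_mul, ENNReal.coe_inv (hcard x)]
    congr 1 <;> exact_mod_cast rfl
  rw [hLHS, ecard_functor, finprod_eq_prod_of_fintype, ENNReal.toReal_prod]
  exact Finset.prod_congr rfl fun y _ => (hfact y).symm
end

section
/- Let φ : 𝒢 ⥤ ℋ be a functor between tame groupoids. If φ is full, then |𝒢| ≤ |ℋ|. -/
open CategoryTheory

/-- A full functor between tame groupoids satisfies `|𝒢| ≤ |ℋ|`. -/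
theorem groupoidCard_le_of_full {G H : Type*} [Groupoid G] [Groupoid H]
    (hG : IsTame G) (hH : IsTame H) (φ : G ⥤ H) [φ.Full] :
    groupoidCard G ≤ groupoidCard H := by
  classical
  -- the induced map on skeletons
  let i : Skeleton G → Skeleton H := fun X => toSkeleton (φ.obj ((fromSkeleton G).obj X))
  have hinj : Function.Injective i := by
    intro X Y h
    have h' : IsIsomorphic (φ.obj ((fromSkeleton G).obj X)) (φ.obj ((fromSkeleton G).obj Y)) :=
      Quotient.exact h
    obtain ⟨e⟩ := h'
    obtain ⟨f, hf⟩ := φ.map_surjective e.hom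
    have hrel : IsIsomorphic ((fromSkeleton G).obj X : G) ((fromSkeleton G).obj Y) :=
      ⟨Groupoid.isoEquivHom _ _ |>.symm f⟩
    have hxy : (Quotient.mk (isIsomorphicSetoid G) ((fromSkeleton G).obj X) : Skeleton G)
        = Quotient.mk _ ((fromSkeleton G).obj Y) := Quotient.sound hrel
    have hx : (Quotient.mk (isIsomorphicSetoid G) ((fromSkeleton G).obj X) : Skeleton G) = X :=
      Quotient.out_eq X
    have hy : (Quotient.mk (isIsomorphicSetoid G) ((fromSkeleton G).obj Y) : Skeleton G) = Y :=
      Quotient.out_eq Y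
    rw [hx, hy] at hxy; exact hxy
  have key : ∀ X : Skeleton G,
      ((Nat.card (Aut X) : ℝ))⁻¹ ≤ ((Nat.card (Aut (i X)) : ℝ))⁻¹ := by
    intro X
    -- Aut X ≃ Aut X.out
    have e1 : Aut X ≃ Aut ((fromSkeleton G).obj X) :=
      (Functor.FullyFaithful.ofFullyFaithful (fromSkeleton G)).isoEquiv
    -- Aut (i X) ≃ Aut (φ.obj X.out)
    have e2 : Aut (i X) ≃ Aut (φ.obj ((fromSkeleton G).obj X)) :=
      (Functor.FullyFaithful.ofFullyFaithful (fromSkeleton H)).isoEquiv.trans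
        (Iso.conjAut (fromSkeletonToSkeletonIso (φ.obj ((fromSkeleton G).obj X)))).toEquiv
    -- surjection Aut X.out → Aut (φ.obj X.out)
    set x := (fromSkeleton G).obj X
    have hsurj : Function.Surjective (fun a : Aut x => φ.mapIso a) := by
      intro g
      obtain ⟨f, hf⟩ := φ.map_surjective g.hom
      refine ⟨Groupoid.isoEquivHom _ _ |>.symm f, Iso.ext ?_⟩
      simpa using hf
    by_cases hfin : Finite (Aut x)
    · have hfin' : Finite (Aut (φ.obj x)) := Finite.of_surjective _ hsurj
      have hle : Nat.card (Aut (φ.obj x)) ≤ Nat.card (Aut x) :=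
        Nat.card_le_card_of_surjective _ hsurj
      have h1 : Nat.card (Aut X) = Nat.card (Aut x) := Nat.card_congr e1
      have h2 : Nat.card (Aut (i X)) = Nat.card (Aut (φ.obj x)) := Nat.card_congr e2
      rw [h1, h2]
      have hpos : 0 < Nat.card (Aut (φ.obj x)) := Nat.card_pos
      apply one_div_le_one_div_of_le (b := (Nat.card (Aut x) : ℝ)) (by exact_mod_cast hpos) (by exact_mod_cast hle)
        |>.trans_eq (one_div _) |>.trans_eq' (one_div _)
    · have : Infinite (Aut x) := not_finite_iff_infinite.mp hfin
      have h1 : Nat.card (Aut X) = 0 := by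
        rw [Nat.card_congr e1]; exact Nat.card_eq_zero_of_infinite
      rw [h1]
      simp only [Nat.cast_zero, inv_zero]
      positivity
  calc groupoidCard G ≤ ∑' Y : Skeleton H, ((Nat.card (Aut Y) : ℝ))⁻¹ := by
        refine Summable.tsum_le_tsum_of_inj i hinj (fun c _ => by positivity) key hG hH
    _ = groupoidCard H := rfl
end

section
/- Let φ : 𝒢 ⥤ ℋ be a functor between tame groupoids. If φ is essentially surjective and faithful, then |𝒢| ≥ |ℋ|. -/
open CategoryTheory

/-- An essentially surjective and faithful functor between tame groupoids satisfies
`|𝒢| ≥ |ℋ|`. -/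
theorem groupoidCard_ge_of_essSurj_faithful {G H : Type*} [Groupoid G] [Groupoid H]
    (hG : IsTame G) (hH : IsTame H) (φ : G ⥤ H) [φ.EssSurj] [φ.Faithful] :
    groupoidCard G ≥ groupoidCard H := by
  classical
  -- section of the induced surjection on skeletons
  set s : Skeleton H → Skeleton G :=
    fun Y => toSkeleton (φ.objPreimage ((fromSkeleton H).obj Y)) with hs
  have hinj : Function.Injective s := by
    intro Y₁ Y₂ h
    have h' := Quotient.exact h
    obtain ⟨e⟩ := h'
    have e' : (fromSkeleton H).obj Y₁ ≅ (fromSkeleton H).obj Y₂ :=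
      (φ.objObjPreimageIso _).symm ≪≫ φ.mapIso e ≪≫ φ.objObjPreimageIso _
    have ffH : (fromSkeleton H).FullyFaithful := .ofFullyFaithful _
    exact skeleton_skeletal H ⟨ffH.preimageIso e'⟩
  -- for each Y, an injection Aut (s Y) ↪ Aut Y
  have key : ∀ Y : Skeleton H,
      ((Nat.card (Aut Y) : ℝ))⁻¹ ≤ ((Nat.card (Aut (s Y)) : ℝ))⁻¹ := by
    intro Y
    set g : G := φ.objPreimage ((fromSkeleton H).obj Y) with hg
    have ffG : (fromSkeleton G).FullyFaithful := .ofFullyFaithful _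
    have ffH : (fromSkeleton H).FullyFaithful := .ofFullyFaithful _
    have mapAutInj : Function.Injective (Functor.mapAut g φ) := by
      intro a b hab
      ext
      apply φ.map_injective
      exact congrArg Iso.hom hab
    let j : Aut (s Y) → Aut Y :=
      (ffH.autMulEquivOfFullyFaithful Y).symm ∘
      (Aut.autMulEquivOfIso (φ.objObjPreimageIso ((fromSkeleton H).obj Y))) ∘
      (Functor.mapAut g φ) ∘
      (Aut.autMulEquivOfIso (fromSkeletonToSkeletonIso g)) ∘
      (ffG.autMulEquivOfFullyFaithful (s Y))
    have hj : Function.Injective j := by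
      apply Function.Injective.comp (MulEquiv.injective _)
      apply Function.Injective.comp (MulEquiv.injective _)
      apply Function.Injective.comp mapAutInj
      exact Function.Injective.comp (MulEquiv.injective _) (MulEquiv.injective _)
    by_cases hfin : Finite (Aut Y)
    · have hfin' : Finite (Aut (s Y)) := Finite.of_injective j hj
      have hle : Nat.card (Aut (s Y)) ≤ Nat.card (Aut Y) :=
        Nat.card_le_card_of_injective j hj
      have hpos : 0 < Nat.card (Aut (s Y)) := Nat.card_pos
      have : (0:ℝ) < (Nat.card (Aut (s Y)) : ℝ) := by exact_mod_cast hpos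
      apply inv_anti₀ this
      exact_mod_cast hle
    · have : Nat.card (Aut Y) = 0 := by
        rw [Nat.card_eq_zero]
        right
        simpa using hfin
      rw [this]
      simp only [Nat.cast_zero, inv_zero]
      positivity
  have := hH.tsum_le_tsum_of_inj s hinj
    (fun c _ => by positivity)
    key hG
  exact this
end

section
/- Let L be a relational first-order language (a language with no function symbols), and let A and B be finite L-structures. Suppose that for every finite L-structure C, the number of L-homomorphisms from C to A equals the number of L-homomorphisms from C to B, i.e. Nat.card (C →[L] A) = Nat.card (C →[L] B). Then A and B are isomorphic as L-structures: Nonempty (A ≃[L] B). -/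
open FirstOrder FirstOrder.Language FirstOrder.Language.Structure

universe u
variable {L : Language} [L.IsRelational]

noncomputable def quotStructure (C : Type u) [L.Structure C] (s : Setoid C) :
    L.Structure (Quotient s) where
  funMap {n} f := isEmptyElim f
  RelMap {n} r x := ∃ y : Fin n → C, (Quotient.mk s ∘ y = x) ∧ RelMap r y

attribute [local instance] quotStructure

def quotMk {C : Type u} [L.Structure C] (s : Setoid C) : C →[L] Quotient s where
  toFun := Quotient.mk s
  map_fun' f := isEmptyElim f
  map_rel' _ x h := ⟨x, rfl, h⟩

def quotLift {C A : Type u} [L.Structure C] [L.Structure A] (s : Setoid C) (f : C →[L] A)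
    (hf : ∀ a b, s.r a b → f a = f b) : Quotient s →[L] A where
  toFun := Quotient.lift f hf
  map_fun' g := isEmptyElim g
  map_rel' r x h := by
    obtain ⟨y, rfl, hy⟩ := h
    exact f.map_rel r y hy

noncomputable def injCard (L : Language) (C A : Type u) [L.Structure C] [L.Structure A] : ℕ :=
  Nat.card {f : C →[L] A // Function.Injective f}

instance homFinite (C A : Type u) [L.Structure C] [L.Structure A] [Finite C] [Finite A] :
    Finite (C →[L] A) :=
  Finite.of_injective (fun f => (f : C → A)) (DFunLike.coe_injective)

instance setoidFinite (C : Type u) [Finite C] : Finite (Setoid C) :=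
  Finite.of_injective (fun s : Setoid C => s.r) (fun s t h => by cases s; cases t; congr)

noncomputable def homSigmaEquiv (C A : Type u) [L.Structure C] [L.Structure A] :
    (Σ s : Setoid C, {g : Quotient s →[L] A // Function.Injective g}) ≃ (C →[L] A) := by
  refine Equiv.ofBijective (fun p => p.2.1.comp (quotMk p.1)) ⟨?_, ?_⟩
  · rintro ⟨s₁, g₁, hg₁⟩ ⟨s₂, g₂, hg₂⟩ h
    have hfun : ∀ a : C, g₁ (Quotient.mk s₁ a) = g₂ (Quotient.mk s₂ a) := fun a =>
      congrFun (congrArg (fun (f : C →[L] A) => (f : C → A)) h) a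
    have hs : s₁ = s₂ := by
      ext a b
      constructor
      · intro hab
        have : g₂ (Quotient.mk s₂ a) = g₂ (Quotient.mk s₂ b) := by
          rw [← hfun a, ← hfun b, Quotient.sound hab]
        exact Quotient.exact (hg₂ this)
      · intro hab
        have : g₁ (Quotient.mk s₁ a) = g₁ (Quotient.mk s₁ b) := by
          rw [hfun a, hfun b, Quotient.sound hab]
        exact Quotient.exact (hg₁ this)
    subst hs
    have : g₁ = g₂ := by
      apply DFunLike.ext
      intro q
      induction q using Quotient.ind
      exact hfun _
    subst this
    rfl
  · intro f
    have hker : ∀ a b : C, (Setoid.ker f).r a b → f a = f b := fun a b h => h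
    refine ⟨⟨Setoid.ker f, quotLift _ f hker, ?_⟩, ?_⟩
    · intro x y
      induction x using Quotient.ind
      induction y using Quotient.ind
      intro h
      exact Quotient.sound h
    · exact DFunLike.ext _ _ fun a => rfl

noncomputable instance (C : Type u) [Finite C] : Fintype (Setoid C) := Fintype.ofFinite _

theorem hom_card_eq (C A : Type u) [L.Structure C] [L.Structure A] [Finite C] [Finite A] :
    Nat.card (C →[L] A) = ∑ s : Setoid C, injCard L (Quotient s) A := by
  rw [← Nat.card_congr (homSigmaEquiv C A)]
  classical
  haveI : ∀ s : Setoid C, Fintype {g : Quotient s →[L] A // Function.Injective g} :=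
    fun s => Fintype.ofFinite _
  rw [Nat.card_eq_fintype_card, Fintype.card_sigma]
  exact Finset.sum_congr rfl fun s _ => (Nat.card_eq_fintype_card).symm

-- strict card decrease for non-bot setoids
theorem quot_card_lt (C : Type u) [Finite C] {s : Setoid C} (hs : s ≠ ⊥) :
    Nat.card (Quotient s) < Nat.card C := by
  classical
  haveI : Fintype C := Fintype.ofFinite C
  obtain ⟨a, b, hab, hne⟩ : ∃ a b : C, s.r a b ∧ a ≠ b := by
    by_contra hcon
    push_neg at hcon
    apply hs
    ext a b
    exact ⟨fun h => hcon a b h, fun h => h ▸ s.refl a⟩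
  rw [Nat.card_eq_fintype_card, Nat.card_eq_fintype_card]
  exact Fintype.card_lt_of_surjective_not_injective (Quotient.mk s) Quotient.mk_surjective
    (fun hi => hne (hi (Quotient.sound hab)))

-- transfer along bot quotient
theorem injCard_bot (C A : Type u) [L.Structure C] [L.Structure A] :
    injCard L (Quotient (⊥ : Setoid C)) A = injCard L C A := by
  apply Nat.card_congr
  refine Equiv.ofBijective
    (fun g => ⟨g.1.comp (quotMk ⊥), fun a b h => ?_⟩) ⟨?_, ?_⟩
  · have := g.2 h
    exact Quotient.exact this
  · rintro ⟨g₁, h₁⟩ ⟨g₂, h₂⟩ h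
    have hv : (g₁ : _ →[L] A).comp (quotMk ⊥) = (g₂ : _ →[L] A).comp (quotMk ⊥) :=
      congrArg Subtype.val h
    have : (g₁ : _ →[L] A) = g₂ := by
      apply DFunLike.ext
      intro q
      induction q using Quotient.ind with
      | _ a => exact DFunLike.congr_fun hv a
    exact Subtype.ext this
  · rintro ⟨f, hf⟩
    have hbot : ∀ a b : C, (⊥ : Setoid C).r a b → f a = f b := fun a b h => by
      cases h; rfl
    refine ⟨⟨quotLift ⊥ f hbot, ?_⟩, ?_⟩
    · intro x y
      induction x using Quotient.ind
      induction y using Quotient.ind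
      intro h
      exact Quotient.sound (hf h)
    · exact Subtype.ext (DFunLike.ext _ _ fun a => rfl)

theorem iterate_map_rel {A : Type u} [L.Structure A] (f : A →[L] A) (k : ℕ) {n}
    (r : L.Relations n) (x : Fin n → A) (h : RelMap r x) : RelMap r ((⇑f)^[k] ∘ x) := by
  induction k with
  | zero => simpa using h
  | succ k ih =>
    have h2 := f.map_rel r _ ih
    have he : (⇑f ∘ ((⇑f)^[k] ∘ x)) = (⇑f)^[k+1] ∘ x := by
      funext i; exact (Function.iterate_succ_apply' (⇑f) k (x i)).symm
    rwa [he] at h2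

theorem endo_symm_map_rel {A : Type u} [L.Structure A] [Finite A] (f : A →[L] A)
    (hf : Function.Bijective f) {n} (r : L.Relations n) (x : Fin n → A)
    (h : RelMap r (⇑f ∘ x)) : RelMap r x := by
  let e : Equiv.Perm A := Equiv.ofBijective f hf
  have hm : 0 < orderOf e := orderOf_pos e
  have hpow : e ^ orderOf e = 1 := pow_orderOf_eq_one e
  have h2 := iterate_map_rel f (orderOf e - 1) r (⇑f ∘ x) h
  have hx : (⇑f)^[orderOf e - 1] ∘ (⇑f ∘ x) = x := by
    funext i
    have hm1 : orderOf e - 1 + 1 = orderOf e := Nat.succ_pred_eq_of_pos hm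
    have hcoe : ⇑f = ⇑e := rfl
    calc (⇑f)^[orderOf e - 1] (f (x i))
        = (⇑f)^[orderOf e - 1 + 1] (x i) := (Function.iterate_succ_apply (⇑f) _ (x i)).symm
      _ = (⇑f)^[orderOf e] (x i) := by rw [hm1]
      _ = (e ^ orderOf e) (x i) := by rw [hcoe, ← Equiv.Perm.coe_pow]
      _ = x i := by rw [hpow]; rfl
  rwa [hx] at h2

/-- Lovász's homomorphism counting lemma: if `A` and `B` are finite structures in a
relational first-order language `L`, and every finite `L`-structure `C` admits exactly
as many homomorphisms into `A` as into `B`, then `A ≅ B`. -/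
theorem lovasz_homomorphism_counting {L : Language} [L.IsRelational]
    {A B : Type u} [L.Structure A] [L.Structure B] [Finite A] [Finite B]
    (h : ∀ (C : Type u) [L.Structure C], Finite C →
      Nat.card (C →[L] A) = Nat.card (C →[L] B)) :
    Nonempty (A ≃[L] B) := by
  classical
  have key : ∀ (n : ℕ), ∀ (C : Type u) [L.Structure C] [Finite C], Nat.card C = n →
      injCard L C A = injCard L C B := by
    intro n
    induction n using Nat.strong_induction_on with
    | _ n IH =>
      intro C _ _ hC
      have hsum := h C ‹Finite C›
      rw [hom_card_eq C A, hom_card_eq C B] at hsum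
      rw [← Finset.add_sum_erase _ _ (Finset.mem_univ (⊥ : Setoid C)),
          ← Finset.add_sum_erase _ (fun s => injCard L (Quotient s) B)
            (Finset.mem_univ (⊥ : Setoid C))] at hsum
      have hrest : ∑ s ∈ (Finset.univ.erase (⊥ : Setoid C)), injCard L (Quotient s) A
          = ∑ s ∈ (Finset.univ.erase (⊥ : Setoid C)), injCard L (Quotient s) B := by
        apply Finset.sum_congr rfl
        intro s hs
        exact IH _ (hC ▸ quot_card_lt C (Finset.ne_of_mem_erase hs)) (Quotient s) rfl
      rw [hrest] at hsum
      have hbot := Nat.add_right_cancel hsum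
      rwa [injCard_bot C A, injCard_bot C B] at hbot
  have hAA : injCard L A A = injCard L A B := key (Nat.card A) A rfl
  have hBB : injCard L B A = injCard L B B := key (Nat.card B) B rfl
  have hfid : Function.Injective (⇑(Language.Hom.id L A)) := fun a b hab => hab
  have hAApos : injCard L A A ≠ 0 := by
    rw [injCard, Nat.card_ne_zero]
    exact ⟨⟨⟨Language.Hom.id L A, hfid⟩⟩, inferInstance⟩
  have hgid : Function.Injective (⇑(Language.Hom.id L B)) := fun a b hab => hab
  have hBBpos : injCard L B B ≠ 0 := by
    rw [injCard, Nat.card_ne_zero]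
    exact ⟨⟨⟨Language.Hom.id L B, hgid⟩⟩, inferInstance⟩
  have hABex : Nonempty {f : A →[L] B // Function.Injective f} := by
    have : injCard L A B ≠ 0 := hAA ▸ hAApos
    rw [injCard, Nat.card_ne_zero] at this
    exact this.1
  have hBAex : Nonempty {f : B →[L] A // Function.Injective f} := by
    have : injCard L B A ≠ 0 := hBB.symm ▸ hBBpos
    rw [injCard, Nat.card_ne_zero] at this
    exact this.1
  obtain ⟨f, hfinj⟩ := hABex.some
  obtain ⟨g, hginj⟩ := hBAex.some
  have hcard : Nat.card A = Nat.card B :=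
    le_antisymm (Nat.card_le_card_of_injective _ hfinj) (Nat.card_le_card_of_injective _ hginj)
  have hfbij : Function.Bijective (⇑f) := (Nat.bijective_iff_injective_and_card ⇑f).2 ⟨hfinj, hcard⟩
  have hφbij : Function.Bijective (⇑(g.comp f)) :=
    Finite.injective_iff_bijective.mp (hginj.comp hfinj)
  refine ⟨⟨Equiv.ofBijective ⇑f hfbij, fun {n} fn => isEmptyElim fn, ?_⟩⟩
  intro n r x
  constructor
  · intro hx
    have h1 : RelMap r (⇑g ∘ (⇑f ∘ x)) := g.map_rel r _ hx
    exact endo_symm_map_rel (g.comp f) hφbij r x h1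
  · intro hx
    exact f.map_rel r x hx
end
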